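/- Let n ≥ 2 and let i be an integer with 1 ≤ i ≤ n−1. For every permutation p of {1,…,n}, the entries p_i and p_{i+1} are not both leaves of the minmax tree T^m_p. -/

import Mathlib

/-- Binary trees with natural-number labels, used to model minmax trees of
permutations. -/
inductive BTree where
  | nil : BTree
  | node : ℕ → BTree → BTree → BTree
deriving DecidableEq, Repr

namespace BTree

/-- The label of the root (if any). -/
def rootVal : BTree → Option ℕ
  | .nil => none
  | .node v _ _ => some v

/-- Whether the value `x` occurs as a label in the tree. -/
def memB : BTree → ℕ → Bool
  | .nil, _ => false
  | .node v l r, x => (x == v) || memB l x || memB r x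

/-- The number of children of the (unique, for permutations) node labelled `x`. -/
def numChildren : BTree → ℕ → ℕ
  | .nil, _ => 0
  | .node v l r, x =>
      if x = v then (if l = .nil then 0 else 1) + (if r = .nil then 0 else 1)
      else numChildren l x + numChildren r x

/-- `x` is a leaf of the tree: it occurs in the tree and has no children. -/
def IsLeaf (t : BTree) (x : ℕ) : Prop := t.memB x = true ∧ t.numChildren x = 0

instance (t : BTree) (x : ℕ) : Decidable (t.IsLeaf x) := by unfold IsLeaf; infer_instance

/-- `childB t x y = true` iff `x` is a child of `y` in `t`, i.e. `x` is the root of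
the left or the right subtree hanging from `y`. -/
def childB : BTree → ℕ → ℕ → Bool
  | .nil, _, _ => false
  | .node v l r, x, y =>
      ((y == v) && (l.rootVal == some x || r.rootVal == some x))
      || childB l x y || childB r x y

/-- `ancB t x y = true` iff `x` is a (strict) ancestor of `y` in `t`, i.e. `y` lies
in a subtree hanging from `x`. -/
def ancB : BTree → ℕ → ℕ → Bool
  | .nil, _, _ => false
  | .node v l r, x, y =>
      ((x == v) && (memB l y || memB r y)) || ancB l x y || ancB r x y

end BTree

/-- `x` is the leftmost-eligible extreme letter of `l`: the minimum or the maximum. -/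
def isExtreme (l : List ℕ) (x : ℕ) : Bool :=
  (l.min? == some x) || (l.max? == some x)

/-- Fuelled construction of the minmax tree of a list of distinct naturals:
split the list as `u ++ [m] ++ v` where `m` is the leftmost of the minimum and
maximum letters, put `m` at the root and recurse on `u` (left) and `v` (right). -/
def mmAux : ℕ → List ℕ → BTree
  | 0, _ => .nil
  | fuel+1, l =>
    if l.isEmpty then .nil
    else
      let k := l.findIdx (isExtreme l)
      .node (l.getD k 0) (mmAux fuel (l.take k)) (mmAux fuel (l.drop (k+1)))

/-- The minmax tree `T^m_p` of a word `l` (with distinct letters). -/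
def minmaxTree (l : List ℕ) : BTree := mmAux l.length l

/-- The word `p_1 p_2 … p_n` on the letters `{1,…,n}` associated to a permutation
`p` of `Fin n`. -/
def permList (n : ℕ) (p : Equiv.Perm (Fin n)) : List ℕ :=
  List.ofFn (fun i => (p i : ℕ) + 1)

/-- The `i`-th entry `p_i` (1-indexed) of the permutation `p`. -/
def entryAt (n : ℕ) (p : Equiv.Perm (Fin n)) (i : ℕ) : ℕ :=
  (permList n p).getD (i - 1) 0


lemma memB_false_numChildren : ∀ (t : BTree) (x : ℕ), t.memB x = false → t.numChildren x = 0
  | .nil, _, _ => rfl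
  | .node v l r, x, h => by
    simp only [BTree.memB, Bool.or_eq_false_iff, beq_eq_false_iff_ne, ne_eq] at h
    obtain ⟨⟨h1, h2⟩, h3⟩ := h
    simp [BTree.numChildren, h1, memB_false_numChildren l x h2, memB_false_numChildren r x h3]

lemma findIdx_lt (l : List ℕ) (hl : l ≠ []) : l.findIdx (isExtreme l) < l.length := by
  apply List.findIdx_lt_length_of_exists
  cases h : l.min? with
  | none => exact absurd (List.min?_eq_none_iff.mp h) hl
  | some a =>
    refine ⟨a, List.min?_mem h, ?_⟩
    simp [isExtreme, h]

lemma mmAux_ne_nil (fuel : ℕ) (l : List ℕ) (h : l ≠ []) (hf : 1 ≤ fuel) :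
    mmAux fuel l ≠ .nil := by
  obtain ⟨f, rfl⟩ := Nat.exists_eq_add_of_le hf
  rw [Nat.add_comm]
  simp [mmAux, List.isEmpty_iff, h]

lemma mem_of_memB : ∀ (fuel : ℕ) (l : List ℕ) (x : ℕ), l.length ≤ fuel →
    (mmAux fuel l).memB x = true → x ∈ l := by
  intro fuel
  induction fuel with
  | zero => intro l x _ h; simp [mmAux, BTree.memB] at h
  | succ f ih =>
    intro l x hlen h
    by_cases hl : l = []
    · subst hl; simp [mmAux, BTree.memB] at h
    · have hk := findIdx_lt l hl
      set k := l.findIdx (isExtreme l) with hkdef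
      rw [show mmAux (f+1) l = .node (l.getD k 0) (mmAux f (l.take k)) (mmAux f (l.drop (k+1)))
        by simp [mmAux, List.isEmpty_iff, hl, hkdef]] at h
      simp only [BTree.memB, Bool.or_eq_true, beq_iff_eq] at h
      rcases h with (rfl | h) | h
      · rw [List.getD_eq_getElem l 0 hk]; exact List.getElem_mem hk
      · have : x ∈ l.take k := ih (l.take k) x (by simp; omega) h
        exact List.mem_of_mem_take this
      · have : x ∈ l.drop (k+1) := ih (l.drop (k+1)) x (by simp; omega) h
        exact List.mem_of_mem_drop this

lemma main_adjacent : ∀ (fuel : ℕ) (l : List ℕ), l.Nodup → l.length ≤ fuel →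
    ∀ j, j + 1 < l.length →
    ¬ ((mmAux fuel l).IsLeaf (l.getD j 0) ∧ (mmAux fuel l).IsLeaf (l.getD (j+1) 0)) := by
  intro fuel
  induction fuel with
  | zero => intro l _ hlen j hj; omega
  | succ f ih =>
    intro l hnd hlen j hj ⟨h1, h2⟩
    have hl : l ≠ [] := by intro h; subst h; simp at hj
    have hk := findIdx_lt l hl
    set k := l.findIdx (isExtreme l) with hkdef
    have htree : mmAux (f+1) l
        = .node (l.getD k 0) (mmAux f (l.take k)) (mmAux f (l.drop (k+1))) := by
      simp [mmAux, List.isEmpty_iff, hl, hkdef]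
    have hmval : l.getD k 0 = l[k] := List.getD_eq_getElem l 0 hk
    have hjlt : j < l.length := by omega
    -- helper: m is not a leaf
    have hmnotleaf : ¬ (mmAux (f+1) l).IsLeaf (l.getD k 0) := by
      intro ⟨_, hnc⟩
      rw [htree] at hnc
      simp only [BTree.numChildren, if_pos rfl] at hnc
      have hL : mmAux f (l.take k) = .nil := by by_contra hc; simp [hc] at hnc
      have hR : mmAux f (l.drop (k+1)) = .nil := by by_contra hc; simp [hc] at hnc
      rcases Nat.eq_zero_or_pos k with hk0 | hkpos
      · have hne : l.drop (k+1) ≠ [] := by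
          intro h
          have h2 := congrArg List.length h
          simp only [List.length_drop, List.length_nil] at h2
          omega
        exact mmAux_ne_nil f _ hne (by omega) hR
      · have hne : l.take k ≠ [] := by
          intro h
          have h2 := congrArg List.length h
          simp only [List.length_take, List.length_nil] at h2
          omega
        exact mmAux_ne_nil f _ hne (by omega) hL
    -- transfer lemmas
    have hdisj : ∀ a b (ha : a < l.length) (hb : b < l.length), a ≠ b → l[a] ≠ l[b] := by
      intro a b ha hb hab he
      exact hab ((hnd.getElem_inj_iff).mp he)
    have hmemR : ∀ a (ha : a < l.length), a < k → (mmAux f (l.drop (k+1))).memB l[a] = false := by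
      intro a ha hak
      by_contra hc
      rw [Bool.not_eq_false] at hc
      have hmem := mem_of_memB f _ _ (by simp; omega) hc
      obtain ⟨i, hi, hieq⟩ := List.mem_iff_getElem.mp hmem
      rw [List.getElem_drop] at hieq
      have : a = k + 1 + i := (hnd.getElem_inj_iff).mp hieq.symm
      omega
    have hmemL : ∀ a (ha : a < l.length), k < a → (mmAux f (l.take k)).memB l[a] = false := by
      intro a ha hak
      by_contra hc
      rw [Bool.not_eq_false] at hc
      have hmem := mem_of_memB f _ _ (by simp; omega) hc
      obtain ⟨i, hi, hieq⟩ := List.mem_iff_getElem.mp hmem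
      have hik : i < k := by simp at hi; omega
      rw [List.getElem_take] at hieq
      have : a = i := (hnd.getElem_inj_iff).mp hieq.symm
      omega
    have hleafL : ∀ a (ha : a < l.length), a < k →
        (mmAux (f+1) l).IsLeaf l[a] → (mmAux f (l.take k)).IsLeaf l[a] := by
      intro a ha hak ⟨hm, hc⟩
      rw [htree] at hm hc
      have hne : l[a] ≠ l.getD k 0 := by rw [hmval]; exact hdisj a k ha hk (by omega)
      simp only [BTree.memB, Bool.or_eq_true, beq_iff_eq] at hm
      simp only [BTree.numChildren, if_neg hne] at hc
      have hR0 := hmemR a ha hak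
      refine ⟨?_, by omega⟩
      rcases hm with (h | h) | h
      · exact absurd h hne
      · exact h
      · rw [hR0] at h; exact absurd h (by simp)
    have hleafR : ∀ a (ha : a < l.length), k < a →
        (mmAux (f+1) l).IsLeaf l[a] → (mmAux f (l.drop (k+1))).IsLeaf l[a] := by
      intro a ha hak ⟨hm, hc⟩
      rw [htree] at hm hc
      have hne : l[a] ≠ l.getD k 0 := by rw [hmval]; exact hdisj a k ha hk (by omega)
      simp only [BTree.memB, Bool.or_eq_true, beq_iff_eq] at hm
      simp only [BTree.numChildren, if_neg hne] at hc
      have hL0 := hmemL a ha hak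
      have hLn := memB_false_numChildren _ _ hL0
      refine ⟨?_, by omega⟩
      rcases hm with (h | h) | h
      · exact absurd h hne
      · rw [hL0] at h; exact absurd h (by simp)
      · exact h
    rw [List.getD_eq_getElem l 0 hjlt] at h1
    rw [List.getD_eq_getElem l 0 hj] at h2
    rcases lt_trichotomy (j+1) k with hc | hc | hc
    · -- both in left subtree
      have hLnd : (l.take k).Nodup := (List.take_sublist k l).nodup hnd
      have hjj : j + 1 < (l.take k).length := by simp; omega
      apply ih (l.take k) hLnd (by simp; omega) j hjj
      have e1 : (l.take k).getD j 0 = l[j] := by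
        rw [List.getD_eq_getElem _ 0 (by simp; omega), List.getElem_take]
      have e2 : (l.take k).getD (j+1) 0 = l[j+1] := by
        rw [List.getD_eq_getElem _ 0 hjj, List.getElem_take]
      rw [e1, e2]
      exact ⟨hleafL j hjlt (by omega) h1, hleafL (j+1) hj (by omega) h2⟩
    · -- j+1 = k : second entry is m
      apply hmnotleaf
      have he : l[j+1] = l[k] := by congr 1
      rw [hmval, ← he]; exact h2
    · rcases Nat.lt_or_ge k j with hc2 | hc2
      · -- both in right subtree
        have hRnd : (l.drop (k+1)).Nodup := (List.drop_sublist (k+1) l).nodup hnd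
        set j' := j - (k+1) with hj'
        have hjeq : j = k + 1 + j' := by omega
        have hjj : j' + 1 < (l.drop (k+1)).length := by simp; omega
        apply ih (l.drop (k+1)) hRnd (by simp; omega) j' hjj
        have e1 : (l.drop (k+1)).getD j' 0 = l[j] := by
          rw [List.getD_eq_getElem _ 0 (by simp; omega), List.getElem_drop]
          congr 1; omega
        have e2 : (l.drop (k+1)).getD (j'+1) 0 = l[j+1] := by
          rw [List.getD_eq_getElem _ 0 hjj, List.getElem_drop]
          congr 1; omega
        rw [e1, e2]
        exact ⟨hleafR j hjlt (by omega) h1, hleafR (j+1) hj (by omega) h2⟩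
      · -- j = k : first entry is m
        have : j = k := by omega
        apply hmnotleaf
        have he : l[j] = l[k] := by congr 1
        rw [hmval, ← he]; exact h1

/-- For `n ≥ 2` and `1 ≤ i ≤ n − 1`, in no permutation `p` of
`{1,…,n}` are both `p_i` and `p_{i+1}` leaves of the minmax tree. -/
theorem adjacent_entries_not_both_leaves (n : ℕ) (hn : 2 ≤ n) (i : ℕ) (hi1 : 1 ≤ i)
    (hi2 : i ≤ n - 1) (p : Equiv.Perm (Fin n)) :
    ¬ ((minmaxTree (permList n p)).IsLeaf (entryAt n p i) ∧
       (minmaxTree (permList n p)).IsLeaf (entryAt n p (i + 1))) := by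
  have hlen : (permList n p).length = n := by simp [permList]
  have hnd : (permList n p).Nodup := by
    rw [permList, List.nodup_ofFn]
    intro a b hab
    simp only [Nat.add_right_cancel_iff, Fin.val_eq_val] at hab
    exact p.injective hab
  have := main_adjacent n (permList n p) hnd (le_of_eq hlen) (i - 1) (by omega)
  rw [show i - 1 + 1 = i by omega] at this
  unfold minmaxTree entryAt
  rw [hlen]
  exact this
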